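/- Let σ be a non-identity bijection on candidates with the property that for every contest c, every candidate i ∈ N_c, and every n ≥ 1: σ^n(i) ∈ N_c implies σ^n(i) = i (each cycle of σ contains at most one candidate per contest). Then there exists a deck of feasible ballots such that: (a) every candidate receives at least one vote, (b) within each contest, all candidates receive pairwise distinct numbers of votes, and (c) T^σ equals T*, i.e., the deck fails to detect σ. Concretely, if σ has cycles with element-sets O_1,…,O_K, the deck containing k copies of the ballot O_k for each k = 1,…,K works. -/

import Mathlib

open Finset

variable {ι γ : Type*} [Fintype ι] [DecidableEq ι] [DecidableEq γ]

/-- A ballot `β` is feasible if, in every contest `c`, it selects at most `v c` candidates. -/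
def feasibleBallot (con : ι → γ) (v : γ → ℕ) (β : Finset ι) : Prop :=
  ∀ c : γ, (β.filter fun j => con j = c).card ≤ v c

/-- The tally of candidate `i` output by a machine whose candidate-to-target mapping is `σ`,
on the deck `β`. A ballot contributes iff it selects target `σ i` and the contest of `i`
is not interpreted as overvoted under `σ`. -/
def tally (con : ι → γ) (v : γ → ℕ) (σ : ι → ι) {B : ℕ}
    (β : Fin B → Finset ι) (i : ι) : ℕ :=
  (Finset.univ.filter fun b : Fin B => σ i ∈ β b ∧
    (Finset.univ.filter fun j : ι => con j = con i ∧ σ j ∈ β b).card ≤ v (con i)).card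

/-- The number of ballots of the deck selecting the target of candidate `i`. -/
def voteCount {B : ℕ} (β : Fin B → Finset ι) (i : ι) : ℕ :=
  (Finset.univ.filter fun b : Fin B => i ∈ β b).card

theorem exists_legal_deck_missing_cross_contest_perm
    (con : ι → γ) (v : γ → ℕ) (hv : ∀ c, 1 ≤ v c)
    (σ : Equiv.Perm ι) (hσ : σ ≠ 1)
    (hcyc : ∀ (i : ι) (n : ℕ), 1 ≤ n → con ((σ ^ n) i) = con i → (σ ^ n) i = i) :
    ∃ (B : ℕ) (β : Fin B → Finset ι),
      (∀ b, feasibleBallot con v (β b)) ∧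
      (∀ i : ι, 1 ≤ tally con v id β i) ∧
      (∀ i j : ι, i ≠ j → con i = con j →
        tally con v id β i ≠ tally con v id β j) ∧
      tally con v (⇑σ) β = tally con v id β := by
  classical
  -- same cycle & same contest ⇒ equal
  have hsame : ∀ i j : ι, σ.SameCycle i j → con i = con j → i = j := by
    intro i j hij hc
    obtain ⟨n, -, rfl⟩ := hij.exists_pow_eq'
    rcases Nat.eq_zero_or_pos n with rfl | hn
    · simp
    · exact (hcyc i n hn hc.symm).symm
  let s : Setoid ι := Equiv.Perm.SameCycle.setoid σ
  haveI : Fintype (Quotient s) := Fintype.ofFinite _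
  set K := Fintype.card (Quotient s) with hK
  let e : Quotient s ≃ Fin K := Fintype.equivFin _
  let O : Fin K → Finset ι := fun a => univ.filter fun i => e ⟦i⟧ = a
  have hOmem : ∀ (a : Fin K) (j : ι), j ∈ O a ↔ e ⟦j⟧ = a := by
    intro a j; simp [O]
  have hquot : ∀ i j : ι, (⟦i⟧ : Quotient s) = ⟦j⟧ ↔ σ.SameCycle i j := by
    intro i j
    constructor
    · intro h; exact Quotient.exact h
    · intro h; exact Quotient.sound h
  let β' : Fin K × Fin K → Finset ι := fun p =>
    if (p.2 : ℕ) ≤ (p.1 : ℕ) then O p.1 else ∅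
  let β : Fin (K * K) → Finset ι := fun b => β' (finProdFinEquiv.symm b)
  -- σ preserves each ballot
  have hσO : ∀ (a : Fin K) (j : ι), σ j ∈ O a ↔ j ∈ O a := by
    intro a j
    rw [hOmem, hOmem]
    have : (⟦σ j⟧ : Quotient s) = ⟦j⟧ := (hquot _ _).2 ⟨-1, by simp⟩
    rw [this]
  have hσβ : ∀ (b : Fin (K * K)) (j : ι), σ j ∈ β b ↔ j ∈ β b := by
    intro b j
    simp only [β, β']
    split
    · exact hσO _ _
    · simp
  -- each ballot meets each contest at most once
  have hcard1 : ∀ (b : Fin (K * K)) (c : γ), ((β b).filter fun j => con j = c).card ≤ 1 := by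
    intro b c
    refine Finset.card_le_one.2 ?_
    intro x hx y hy
    simp only [β, β', mem_filter] at hx hy
    rcases hx with ⟨hx, hcx⟩
    rcases hy with ⟨hy, hcy⟩
    split_ifs at hx hy with h
    · rw [hOmem] at hx hy
      have : σ.SameCycle x y := (hquot _ _).1 (e.injective (hx.trans hy.symm))
      exact hsame _ _ this (hcx.trans hcy.symm)
    · simp at hx
  -- the overvote condition always holds (for id and for σ)
  have hover : ∀ (τ : ι → ι), (∀ b j, τ j ∈ β b ↔ j ∈ β b) → ∀ (b : Fin (K * K)) (i : ι),
      (univ.filter fun j : ι => con j = con i ∧ τ j ∈ β b).card ≤ v (con i) := by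
    intro τ hτ b i
    have : (univ.filter fun j : ι => con j = con i ∧ τ j ∈ β b)
        = (β b).filter fun j => con j = con i := by
      ext j; simp [hτ b j, and_comm]
    rw [this]
    exact le_trans (hcard1 b (con i)) (hv (con i))
  have hid : ∀ (b : Fin (K * K)) (j : ι), id j ∈ β b ↔ j ∈ β b := fun _ _ => Iff.rfl
  -- tally computation
  have htally : ∀ i : ι, tally con v id β i = (e ⟦i⟧ : ℕ) + 1 := by
    intro i
    have h1 : tally con v id β i
        = (univ.filter fun b : Fin (K * K) => i ∈ β b).card := by
      unfold tally
      congr 1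
      ext b
      simp only [mem_filter, mem_univ, true_and, id]
      exact ⟨fun h => h.1, fun h => ⟨h, hover id hid b i⟩⟩
    rw [h1]
    have h2 : ∀ b : Fin (K * K), i ∈ β b ↔
        (finProdFinEquiv.symm b).1 = e ⟦i⟧ ∧
        ((finProdFinEquiv.symm b).2 : ℕ) ≤ ((finProdFinEquiv.symm b).1 : ℕ) := by
      intro b
      simp only [β, β']
      split_ifs with h
      · rw [hOmem]
        exact ⟨fun hh => ⟨hh.symm, h⟩, fun hh => hh.1.symm⟩
      · exact iff_of_false (Finset.notMem_empty i) fun hh => h hh.2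
    have h3 : (univ.filter fun b : Fin (K * K) => i ∈ β b).card
        = (univ.filter fun p : Fin K × Fin K =>
            p.1 = e ⟦i⟧ ∧ (p.2 : ℕ) ≤ (p.1 : ℕ)).card := by
      refine Finset.card_nbij (fun b => finProdFinEquiv.symm b) ?_ ?_ ?_
      · intro b hb
        simp only [Finset.mem_coe, mem_filter, mem_univ, true_and] at hb ⊢
        exact (h2 b).1 hb
      · intro x hx y hy hxy
        exact finProdFinEquiv.symm.injective hxy
      · intro p hp
        refine ⟨finProdFinEquiv p, ?_, by simp⟩
        simp only [Set.mem_setOf_eq, coe_filter, mem_univ, true_and] at hp ⊢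
        rw [h2]
        simpa using hp
    rw [h3]
    have h4 : (univ.filter fun p : Fin K × Fin K =>
          p.1 = e ⟦i⟧ ∧ (p.2 : ℕ) ≤ (p.1 : ℕ))
        = {e ⟦i⟧} ×ˢ (Finset.Iic (e ⟦i⟧)) := by
      ext p
      simp only [mem_filter, mem_univ, true_and, Finset.mem_product, Finset.mem_singleton,
        Finset.mem_Iic]
      constructor
      · rintro ⟨h1, h⟩
        refine ⟨h1, ?_⟩
        rw [← h1]
        exact Fin.le_def.2 h
      · rintro ⟨h1, h⟩
        refine ⟨h1, ?_⟩
        have h' := Fin.le_def.1 h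
        have h'' : (p.1 : ℕ) = ((e ⟦i⟧ : Fin K) : ℕ) := congrArg Fin.val h1
        omega
    rw [h4, Finset.card_product, Finset.card_singleton, Fin.card_Iic, one_mul]
  refine ⟨K * K, β, ?_, ?_, ?_, ?_⟩
  · intro b c
    exact le_trans (hcard1 b c) (hv c)
  · intro i
    rw [htally]; omega
  · intro i j hij hc
    rw [htally, htally]
    intro h
    have : (e ⟦i⟧ : Fin K) = e ⟦j⟧ := Fin.ext (by omega)
    have hq : (⟦i⟧ : Quotient s) = ⟦j⟧ := e.injective this
    exact hij (hsame _ _ ((hquot _ _).1 hq) hc)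
  · funext i
    unfold tally
    congr 1
    ext b
    simp only [mem_filter, mem_univ, true_and, id]
    constructor
    · rintro ⟨h1, -⟩
      exact ⟨(hσβ b i).1 h1, hover id hid b i⟩
    · rintro ⟨h1, -⟩
      exact ⟨(hσβ b i).2 h1, hover σ hσβ b i⟩
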